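/- arXiv:1710.02771 — 2 statements merged into one kernel-verified Lean document; each statement's English description precedes it below -/
import Mathlib

section
/- If each G_j is an r_j-regular graph of order n_j, then the spectrum of A_α of the H-join G = ⋁_H {G_j : 1 ≤ j ≤ k} is the multiset union, over those j with G_j ≠ K_1, of {α s_j + λ : λ ∈ σ(A_α(G_j)) \ {r_j}} (where the Perron eigenvalue r_j is removed once), together with the spectrum of the k×k matrix M(G) with diagonal entries α s_j + r_j and off-diagonal (i,j)-entries (1-α) δ_{ij} √(n_i n_j), where δ_{ij} = 1 iff ij ∈ E(H) and s_j = Σ_{jl ∈ E(H)} n_l. -/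
open Matrix Polynomial

noncomputable def Aalpha {V : Type*} [Fintype V] (G : SimpleGraph V) (α : ℝ) :
    Matrix V V ℝ :=
  letI : DecidableEq V := Classical.decEq V
  letI : DecidableRel G.Adj := fun a b => Classical.dec _
  α • Matrix.diagonal (fun v => (G.degree v : ℝ)) + (1 - α) • G.adjMatrix ℝ

/-- The `H`-join of the family of graphs `G i`. -/
def HJoin {ι : Type*} (H : SimpleGraph ι) {V : ι → Type*} (G : ∀ i, SimpleGraph (V i)) :
    SimpleGraph (Σ i, V i) where
  Adj x y := H.Adj x.1 y.1 ∨ ∃ (i : ι) (a b : V i), x = ⟨i, a⟩ ∧ y = ⟨i, b⟩ ∧ (G i).Adj a b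
  symm := by
    refine ⟨?_⟩
    rintro ⟨i, a⟩ ⟨j, b⟩ (h | ⟨k, u, v, h1, h2, h3⟩)
    · exact Or.inl h.symm
    · exact Or.inr ⟨k, v, u, h2, h1, h3.symm⟩
  loopless := by
    refine ⟨?_⟩
    rintro ⟨i, a⟩ (h | ⟨k, u, v, h1, h2, h3⟩)
    · exact H.loopless.irrefl _ h
    · rw [h1] at h2
      have huv : u = v := by simpa using h2
      subst huv
      exact (G k).loopless.irrefl _ h3

lemma Aalpha_eq {V : Type*} [Fintype V] [DecidableEq V] (G : SimpleGraph V)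
    [DecidableRel G.Adj] (α : ℝ) :
    Aalpha G α = α • Matrix.diagonal (fun v => (G.degree v : ℝ)) + (1 - α) • G.adjMatrix ℝ := by
  unfold Aalpha
  congr!


lemma charpoly_of_conj {n : Type*} [Fintype n] [DecidableEq n]
    (A U D : Matrix n n ℝ) (hU : Uᵀ * U = 1) (hAU : A * U = U * D) :
    A.charpoly = D.charpoly := by
  have hU' : U * Uᵀ = 1 := mul_eq_one_comm.mp hU
  have hA : A = U * D * Uᵀ := by
    calc A = A * (U * Uᵀ) := by rw [hU', mul_one]
    _ = (A * U) * Uᵀ := by rw [Matrix.mul_assoc]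
    _ = U * D * Uᵀ := by rw [hAU]
  set f : Matrix n n ℝ →+* Matrix n n ℝ[X] := (C : ℝ →+* ℝ[X]).mapMatrix with hf
  have h1 : f U * f Uᵀ = 1 := by rw [← _root_.map_mul, hU', _root_.map_one]
  have h2 : f Uᵀ * f U = 1 := mul_eq_one_comm.mp h1
  have key : charmatrix A = (f U) * charmatrix D * (f Uᵀ) := by
    rw [charmatrix, charmatrix, hA]
    rw [Matrix.mul_sub, Matrix.sub_mul]
    congr 1
    · rw [← (Matrix.scalar_commute X (fun r => Commute.all _ _) (f U)).eq,
        Matrix.mul_assoc, h1, Matrix.mul_one]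
    · rw [_root_.map_mul, _root_.map_mul, Matrix.mul_assoc]
  rw [Matrix.charpoly, Matrix.charpoly, key, Matrix.det_mul, Matrix.det_mul]
  rw [mul_comm, ← mul_assoc, ← Matrix.det_mul, h2, Matrix.det_one, one_mul]

lemma charpoly_diagonal {n : Type*} [Fintype n] [DecidableEq n] (d : n → ℝ) :
    (Matrix.diagonal d).charpoly = ∏ i, (X - C (d i)) := by
  have h : charmatrix (Matrix.diagonal d) = Matrix.diagonal (fun i => X - C (d i)) := by
    ext i j
    by_cases h : i = j
    · subst h; simp
    · simp [charmatrix_apply_ne _ _ _ h, Matrix.diagonal_apply_ne _ h]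
  rw [Matrix.charpoly, h, Matrix.det_diagonal]

lemma roots_charpoly_diagonal {n : Type*} [Fintype n] [DecidableEq n] (d : n → ℝ) :
    (Matrix.diagonal d).charpoly.roots = Finset.univ.val.map d := by
  rw [_root_.charpoly_diagonal]
  have : ∏ i, (X - C (d i)) = ((Finset.univ.val.map d).map (fun a => X - C a)).prod := by
    rw [Multiset.map_map]; rfl
  rw [this, Polynomial.roots_multiset_prod_X_sub_C]


lemma euclid_inner {n : Type*} [Fintype n] (x y : EuclideanSpace ℝ n) :
    (inner ℝ x y : ℝ) = ∑ p, (WithLp.equiv 2 (n → ℝ) x) p * (WithLp.equiv 2 (n → ℝ) y) p := by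
  rw [PiLp.inner_apply]; simp [mul_comm]

lemma exists_adapted_eigenbasis {n : Type*} [Fintype n] [DecidableEq n] [Nonempty n]
    (i₀ : n) (A : Matrix n n ℝ) (hA : A.IsSymm) (r : ℝ)
    (hr : A *ᵥ (fun _ => (1:ℝ)) = r • (fun _ => (1:ℝ))) :
    ∃ (U : Matrix n n ℝ) (d : n → ℝ),
      Uᵀ * U = 1 ∧ A * U = U * Matrix.diagonal d ∧
      (∀ i, U i i₀ = (Real.sqrt (Fintype.card n))⁻¹) ∧ d i₀ = r := by
  classical
  have hcard : (0:ℝ) < Fintype.card n := by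
    exact_mod_cast Fintype.card_pos
  have hsq : Real.sqrt (Fintype.card n) ≠ 0 := by positivity
  set c : ℝ := (Real.sqrt (Fintype.card n))⁻¹ with hc
  have hcne : c ≠ 0 := inv_ne_zero hsq
  set E := EuclideanSpace ℝ n
  set eqv := WithLp.equiv 2 (n → ℝ) with heqv
  set u : E := eqv.symm (fun _ => c) with hu
  have hu0 : u ≠ 0 := by
    intro h
    have : eqv u (Classical.arbitrary n) = 0 := by rw [h]; rfl
    rw [hu] at this
    simp at this
    exact hcne this
  have hAH : A.IsHermitian := by
    rw [Matrix.IsHermitian, Matrix.conjTranspose]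
    simp
    exact hA
  set T : E →ₗ[ℝ] E := Matrix.toEuclideanLin A with hT
  have hTsymm : T.IsSymmetric := Matrix.isHermitian_iff_isSymmetric.mp hAH
  have hmul : ∀ v : E, eqv (T v) = A *ᵥ (eqv v) := by
    intro v
    rw [hT, Matrix.toEuclideanLin_apply]
    rfl
  have hAu : A *ᵥ (eqv u) = r • (eqv u) := by
    have h1 : (eqv u) = c • (fun _ => (1:ℝ)) := by
      funext p; rw [hu]; simp [Pi.smul_apply, smul_eq_mul, mul_one]
    rw [h1, Matrix.mulVec_smul, hr, smul_comm]
  have hTu : T u = r • u := by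
    apply eqv.injective
    rw [hmul, hAu]; exact (WithLp.ofLp_smul (c := r) (x := u)).symm
  set W := (ℝ ∙ u)ᗮ with hW
  have hWinv : ∀ v ∈ W, T v ∈ W := by
    intro v hv
    rw [Submodule.mem_orthogonal_singleton_iff_inner_right] at hv ⊢
    rw [← hTsymm u v, hTu, inner_smul_left]
    simp [hv]
  set T' : W →ₗ[ℝ] W := T.restrict hWinv with hT'
  have hT'symm : T'.IsSymmetric := hTsymm.restrict_invariant hWinv
  set m := Fintype.card n - 1 with hm
  have hcard1 : 1 ≤ Fintype.card n := Fintype.card_pos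
  haveI : Fact (Module.finrank ℝ E = m + 1) := ⟨by
    rw [finrank_euclideanSpace]; omega⟩
  have hfr : Module.finrank ℝ W = m := Submodule.finrank_orthogonal_span_singleton hu0
  set b' := hT'symm.eigenvectorBasis hfr with hb'
  set μ := hT'symm.eigenvalues hfr with hμ
  have hcs : Fintype.card {i : n // i ≠ i₀} = m := by
    rw [hm]
    simpa using Fintype.card_subtype_compl (· = i₀)
  set e := Fintype.equivFinOfCardEq hcs with he
  set b : n → E := fun i => if h : i = i₀ then u else (b' (e ⟨i, h⟩) : E) with hb
  set d : n → ℝ := fun i => if h : i = i₀ then r else μ (e ⟨i, h⟩) with hd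
  have hbeq : ∀ (i : n) (h : ¬ i = i₀), b i = (b' (e ⟨i, h⟩) : E) := by
    intro i h; rw [hb]; exact dif_neg h
  have hdeq : ∀ (i : n) (h : ¬ i = i₀), d i = μ (e ⟨i, h⟩) := by
    intro i h; rw [hd]; exact dif_neg h
  have hbi₀ : b i₀ = u := by rw [hb]; exact dif_pos rfl
  have hdi₀ : d i₀ = r := by rw [hd]; exact dif_pos rfl
  have hbW : ∀ (i : n) (h : i ≠ i₀), (b i) ∈ W := by
    intro i h
    rw [hbeq i h]
    exact (b' (e ⟨i, h⟩)).2
  have hON : Orthonormal ℝ b := by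
    rw [orthonormal_iff_ite]
    intro i j
    by_cases hi : i = i₀ <;> by_cases hj : j = i₀
    · rw [if_pos (hi.trans hj.symm), hi, hj, hbi₀]
      rw [euclid_inner]
      have hp : ∀ p : n, eqv u p = c := fun p => rfl
      show ∑ _p : n, c * c = 1
      rw [Finset.sum_const, Finset.card_univ, nsmul_eq_mul, hc]
      rw [← mul_inv, Real.mul_self_sqrt hcard.le, mul_inv_cancel₀ (ne_of_gt hcard)]
    · rw [if_neg (fun h => hj (h.symm.trans hi)), hi, hbi₀]
      have := hbW j hj
      rw [hW, Submodule.mem_orthogonal_singleton_iff_inner_right] at this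
      exact this
    · rw [if_neg (fun h => hi (h.trans hj)), hj, hbi₀]
      have := hbW i hi
      rw [hW, Submodule.mem_orthogonal_singleton_iff_inner_left] at this
      exact this
    · rw [hbeq i hi, hbeq j hj]
      rw [← Submodule.coe_inner]
      have := orthonormal_iff_ite.mp b'.orthonormal (e ⟨i, hi⟩) (e ⟨j, hj⟩)
      rw [this]
      have hiff : (e ⟨i, hi⟩ = e ⟨j, hj⟩) ↔ (i = j) := by
        rw [Equiv.apply_eq_iff_eq, Subtype.mk_eq_mk]
      by_cases h : i = j
      · rw [if_pos h, if_pos (hiff.mpr h)]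
      · rw [if_neg h, if_neg (fun hh => h (hiff.mp hh))]
  have heig : ∀ i, A *ᵥ (eqv (b i)) = d i • (eqv (b i)) := by
    intro i
    by_cases h : i = i₀
    · subst h
      rw [hbi₀, hdi₀, hAu]
    · rw [hbeq i h, hdeq i h]
      rw [← hmul]
      have h1 : T ((b' (e ⟨i, h⟩)) : E) = μ (e ⟨i, h⟩) • ((b' (e ⟨i, h⟩)) : E) := by
        have h3 := hT'symm.apply_eigenvectorBasis hfr (e ⟨i, h⟩)
        have h2 : ((T' (b' (e ⟨i, h⟩)) : W) : E) = T ((b' (e ⟨i, h⟩)) : E) :=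
          LinearMap.restrict_coe_apply _ _ _
        rw [← h2, ← hb', ← hμ] at *
        rw [h3]
        push_cast
        rfl
      rw [h1]; exact WithLp.ofLp_smul (c := μ (e ⟨i, h⟩)) (x := ((b' (e ⟨i, h⟩)) : E))
  refine ⟨Matrix.of (fun p i => eqv (b i) p), d, ?_, ?_, ?_, ?_⟩
  · ext i j
    have h1 : (inner ℝ (b i) (b j) : ℝ) = if i = j then 1 else 0 :=
      orthonormal_iff_ite.mp hON i j
    rw [euclid_inner] at h1
    rw [Matrix.mul_apply]
    simp only [Matrix.transpose_apply, Matrix.of_apply]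
    rw [h1]
    by_cases h : i = j
    · rw [if_pos h, h, Matrix.one_apply_eq]
    · rw [if_neg h, Matrix.one_apply_ne h]
  · ext p j
    rw [Matrix.mul_apply, Matrix.mul_diagonal]
    simp only [Matrix.of_apply]
    have h1 := congrFun (heig j) p
    rw [Matrix.mulVec, dotProduct] at h1
    simp only [Pi.smul_apply, smul_eq_mul] at h1
    rw [h1, mul_comm]
  · intro i
    simp only [Matrix.of_apply]
    rw [hbi₀]
    rfl
  · exact hdi₀

section Main

variable (k : ℕ) (H : SimpleGraph (Fin k)) [DecidableRel H.Adj]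
    (nn : Fin k → ℕ) (rr : Fin k → ℕ)
    (G : ∀ j : Fin k, SimpleGraph (Fin (nn j))) [∀ j, DecidableRel (G j).Adj]

lemma hjoin_adj_same (j : Fin k) (a b : Fin (nn j)) :
    (HJoin H G).Adj ⟨j, a⟩ ⟨j, b⟩ ↔ (G j).Adj a b := by
  constructor
  · rintro (h | ⟨i, u, v, h1, h2, h3⟩)
    · exact absurd h (H.loopless.irrefl j)
    · cases h1; cases h2; exact h3
  · intro h
    exact Or.inr ⟨j, a, b, rfl, rfl, h⟩

lemma hjoin_adj_diff (j l : Fin k) (hjl : j ≠ l) (a : Fin (nn j)) (b : Fin (nn l)) :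
    (HJoin H G).Adj ⟨j, a⟩ ⟨l, b⟩ ↔ H.Adj j l := by
  constructor
  · rintro (h | ⟨i, u, v, h1, h2, h3⟩)
    · exact h
    · cases h1; cases h2; exact absurd rfl hjl
  · intro h
    exact Or.inl h

variable [DecidableRel (HJoin H G).Adj]

lemma hjoin_degree (hreg : ∀ j, (G j).IsRegularOfDegree (rr j)) (j : Fin k) (a : Fin (nn j)) :
    (HJoin H G).degree ⟨j, a⟩ = rr j + ∑ l ∈ H.neighborFinset j, nn l := by
  classical
  rw [SimpleGraph.degree, SimpleGraph.neighborFinset_eq_filter, Finset.card_filter]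
  rw [← Finset.univ_sigma_univ, Finset.sum_sigma]
  have hterm : ∀ l : Fin k, (∑ b : Fin (nn l), if (HJoin H G).Adj ⟨j, a⟩ ⟨l, b⟩ then 1 else 0)
      = if l = j then rr j else (if H.Adj j l then nn l else 0) := by
    intro l
    by_cases h : l = j
    · subst h
      rw [if_pos rfl]
      have : ∀ b : Fin (nn l), (if (HJoin H G).Adj ⟨l, a⟩ ⟨l, b⟩ then 1 else 0)
          = if (G l).Adj a b then 1 else 0 := by
        intro b
        by_cases hb : (G l).Adj a b
        · rw [if_pos ((hjoin_adj_same k H nn G l a b).mpr hb), if_pos hb]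
        · rw [if_neg (fun hc => hb ((hjoin_adj_same k H nn G l a b).mp hc)), if_neg hb]
      rw [Finset.sum_congr rfl (fun b _ => this b)]
      rw [← Finset.card_filter, ← SimpleGraph.neighborFinset_eq_filter, ← SimpleGraph.degree]
      exact hreg l a
    · have : ∀ b : Fin (nn l), (if (HJoin H G).Adj ⟨j, a⟩ ⟨l, b⟩ then 1 else 0)
          = if H.Adj j l then 1 else 0 := by
        intro b
        by_cases hb : H.Adj j l
        · rw [if_pos ((hjoin_adj_diff k H nn G j l (Ne.symm h) a b).mpr hb), if_pos hb]
        · rw [if_neg (fun hc => hb ((hjoin_adj_diff k H nn G j l (Ne.symm h) a b).mp hc)),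
            if_neg hb]
      rw [Finset.sum_congr rfl (fun b _ => this b), if_neg h]
      by_cases hb : H.Adj j l
      · rw [if_pos hb, Finset.sum_const, Finset.card_univ, Fintype.card_fin,
          smul_eq_mul, mul_one, if_pos hb]
      · rw [if_neg hb, Finset.sum_const, smul_eq_mul, mul_zero, if_neg hb]
  rw [Finset.sum_congr rfl (fun l _ => hterm l)]
  have hsplit : ∀ l : Fin k, (if l = j then rr j else (if H.Adj j l then nn l else 0))
      = (if l = j then rr j else 0) + (if H.Adj j l then nn l else 0) := by
    intro l
    by_cases h : l = j
    · subst h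
      rw [if_pos rfl, if_pos rfl, if_neg (H.loopless.irrefl l), add_zero]
    · rw [if_neg h, if_neg h, zero_add]
  rw [Finset.sum_congr rfl (fun l _ => hsplit l), Finset.sum_add_distrib,
    Finset.sum_ite_eq' Finset.univ j (fun _ => rr j), if_pos (Finset.mem_univ j)]
  congr 1
  rw [SimpleGraph.neighborFinset_eq_filter, Finset.sum_filter]

end Main

lemma Aalpha_isSymm {V : Type*} [Fintype V] [DecidableEq V] (G : SimpleGraph V)
    [DecidableRel G.Adj] (α : ℝ) : (Aalpha G α).IsSymm := by
  rw [Aalpha_eq, Matrix.IsSymm, Matrix.transpose_add, Matrix.transpose_smul,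
    Matrix.transpose_smul, Matrix.diagonal_transpose, SimpleGraph.transpose_adjMatrix]

lemma sum_adj_ite {V : Type*} [Fintype V] (G : SimpleGraph V) [DecidableRel G.Adj]
    {r : ℕ} (hreg : G.IsRegularOfDegree r) (v : V) :
    ∑ u, (if G.Adj v u then (1:ℝ) else 0) = (r : ℝ) := by
  rw [Finset.sum_boole, ← SimpleGraph.neighborFinset_eq_filter,
    SimpleGraph.card_neighborFinset_eq_degree, hreg v]

lemma Aalpha_mulVec_one {V : Type*} [Fintype V] [DecidableEq V] (G : SimpleGraph V)
    [DecidableRel G.Adj] {r : ℕ} (hreg : G.IsRegularOfDegree r) (α : ℝ) :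
    Aalpha G α *ᵥ (fun _ => (1:ℝ)) = (r : ℝ) • (fun _ => (1:ℝ)) := by
  rw [Aalpha_eq, Matrix.add_mulVec, Matrix.smul_mulVec, Matrix.smul_mulVec]
  funext v
  simp only [Pi.add_apply, Pi.smul_apply, smul_eq_mul]
  rw [Matrix.mulVec_diagonal]
  have h2 : (G.adjMatrix ℝ *ᵥ fun _ => (1:ℝ)) v = (r : ℝ) := by
    rw [Matrix.mulVec, dotProduct]
    simp only [SimpleGraph.adjMatrix_apply, mul_one]
    exact sum_adj_ite G hreg v
  rw [h2, hreg v, mul_one]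
  ring

lemma multiset_univ_sigma {ι : Type*} [Fintype ι] {γ : ι → Type*} [∀ i, Fintype (γ i)]
    (f : (Σ i, γ i) → ℝ) :
    (Finset.univ : Finset (Σ i, γ i)).val.map f
      = ∑ i : ι, (Finset.univ : Finset (γ i)).val.map (fun g => f ⟨i, g⟩) := by
  rw [← Finset.univ_sigma_univ]
  show ((Finset.univ.val : Multiset ι).bind
      (fun a => (Finset.univ.val).map (Sigma.mk a))).map f = _
  rw [Multiset.map_bind]
  simp only [Multiset.map_map]
  rfl

section Entries

variable {k : ℕ} (H : SimpleGraph (Fin k)) [DecidableRel H.Adj]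
    {nn : Fin k → ℕ} (rr : Fin k → ℕ)
    (G : ∀ j : Fin k, SimpleGraph (Fin (nn j))) [∀ j, DecidableRel (G j).Adj]
    [DecidableRel (HJoin H G).Adj] (α : ℝ)

lemma bigA_same (hreg : ∀ j, (G j).IsRegularOfDegree (rr j)) (j : Fin k)
    (a b : Fin (nn j)) :
    Aalpha (HJoin H G) α ⟨j, a⟩ ⟨j, b⟩ =
      Aalpha (G j) α a b
        + (if a = b then α * (∑ l ∈ H.neighborFinset j, (nn l : ℝ)) else 0) := by
  classical
  rw [Aalpha_eq, Aalpha_eq]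
  simp only [Matrix.add_apply, Matrix.smul_apply, Matrix.diagonal_apply,
    SimpleGraph.adjMatrix_apply, smul_eq_mul]
  have hadj : (HJoin H G).Adj ⟨j, a⟩ ⟨j, b⟩ ↔ (G j).Adj a b := hjoin_adj_same k H nn G j a b
  have hsig : (⟨j, a⟩ : Σ i, Fin (nn i)) = ⟨j, b⟩ ↔ a = b := by
    constructor
    · intro h; cases h; rfl
    · intro h; cases h; rfl
  have hdeg := hjoin_degree k H nn rr G hreg j a
  by_cases hab : a = b
  · subst hab
    rw [if_pos (hsig.mpr rfl), if_pos rfl, if_pos rfl, hdeg, (hreg j).degree_eq a]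
    by_cases hGa : (G j).Adj a a
    · rw [if_pos (hadj.mpr hGa), if_pos hGa]; push_cast; ring
    · rw [if_neg (fun h => hGa (hadj.mp h)), if_neg hGa]; push_cast; ring
  · rw [if_neg (fun h => hab (hsig.mp h)), if_neg hab, if_neg hab]
    by_cases hGa : (G j).Adj a b
    · rw [if_pos (hadj.mpr hGa), if_pos hGa]; ring
    · rw [if_neg (fun h => hGa (hadj.mp h)), if_neg hGa]; ring

lemma bigA_diff (j l : Fin k) (hjl : j ≠ l) (a : Fin (nn j)) (b : Fin (nn l)) :
    Aalpha (HJoin H G) α ⟨j, a⟩ ⟨l, b⟩ = if H.Adj j l then (1 - α) else 0 := by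
  classical
  rw [Aalpha_eq]
  simp only [Matrix.add_apply, Matrix.smul_apply, Matrix.diagonal_apply,
    SimpleGraph.adjMatrix_apply, smul_eq_mul]
  have hsig : (⟨j, a⟩ : Σ i, Fin (nn i)) ≠ ⟨l, b⟩ := by
    intro h; exact hjl (congrArg Sigma.fst h)
  rw [if_neg hsig, mul_zero, zero_add]
  have hadj : (HJoin H G).Adj ⟨j, a⟩ ⟨l, b⟩ ↔ H.Adj j l := hjoin_adj_diff k H nn G j l hjl a b
  by_cases hH : H.Adj j l
  · rw [if_pos (hadj.mpr hH), if_pos hH, mul_one]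
  · rw [if_neg (fun h => hH (hadj.mp h)), if_neg hH, mul_zero]

end Entries

/-- Spectrum of `A_α` of an `H`-join of regular graphs: the multiset of eigenvalues of
`A_α(⋁_H G_j)` is the union, over blocks `G_j ≠ K_1`, of the eigenvalues of `A_α(G_j)`
other than the degree `r_j` (removed once), shifted by `α s_j`, together with the
eigenvalues of the `k × k` quotient matrix `M(G)`. -/
theorem stmt7 (k : ℕ) (H : SimpleGraph (Fin k)) [DecidableRel H.Adj]
    (nn : Fin k → ℕ) (hpos : ∀ j, 0 < nn j) (rr : Fin k → ℕ)
    (G : ∀ j : Fin k, SimpleGraph (Fin (nn j))) [∀ j, DecidableRel (G j).Adj]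
    (hreg : ∀ j, (G j).IsRegularOfDegree (rr j))
    (α : ℝ) (hα : α ∈ Set.Ico (0 : ℝ) 1) :
    (Aalpha (HJoin H G) α).charpoly.roots =
      (Matrix.of fun a b : Fin k =>
          if a = b then α * (∑ l ∈ H.neighborFinset a, (nn l : ℝ)) + (rr a : ℝ)
          else if H.Adj a b then (1 - α) * Real.sqrt ((nn a : ℝ) * (nn b : ℝ))
          else 0).charpoly.roots +
      ∑ j ∈ Finset.univ.filter (fun j => 1 < nn j),
        (((Aalpha (G j) α).charpoly.roots).erase ((rr j : ℕ) : ℝ)).map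
          (fun μ => α * (∑ l ∈ H.neighborFinset j, (nn l : ℝ)) + μ) := by
  classical
  set i0 : ∀ j : Fin k, Fin (nn j) := fun j => ⟨0, hpos j⟩ with hi0
  have hsqpos : ∀ j, (0:ℝ) < Real.sqrt (nn j) :=
    fun j => Real.sqrt_pos.mpr (by exact_mod_cast hpos j)
  have hsqne : ∀ j, Real.sqrt (nn j) ≠ 0 := fun j => (hsqpos j).ne'
  -- per-block adapted eigenbases
  have hex : ∀ j : Fin k, ∃ (U : Matrix (Fin (nn j)) (Fin (nn j)) ℝ) (d : Fin (nn j) → ℝ),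
      Uᵀ * U = 1 ∧ Aalpha (G j) α * U = U * Matrix.diagonal d ∧
      (∀ i, U i (i0 j) = (Real.sqrt (Fintype.card (Fin (nn j))))⁻¹) ∧
      d (i0 j) = (rr j : ℝ) := by
    intro j
    haveI : Nonempty (Fin (nn j)) := ⟨i0 j⟩
    exact exists_adapted_eigenbasis (i0 j) _ (Aalpha_isSymm (G j) α) _
      (Aalpha_mulVec_one (G j) (hreg j) α)
  choose U d hUo hAU hUcol hd0 using hex
  have hUcol' : ∀ j i, U j i (i0 j) = (Real.sqrt (nn j))⁻¹ := by
    intro j i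
    rw [hUcol j i, Fintype.card_fin]
  -- column sums of U j
  have hcolsum : ∀ (l : Fin k) (b : Fin (nn l)),
      ∑ q, U l q b = if (b:ℕ) = 0 then Real.sqrt (nn l) else 0 := by
    intro l b
    have h1 : ∀ q, U l q b = Real.sqrt (nn l) * (U l q (i0 l) * U l q b) := by
      intro q
      rw [hUcol' l q, ← mul_assoc, mul_inv_cancel₀ (hsqne l), one_mul]
    rw [Finset.sum_congr rfl (fun q _ => h1 q), ← Finset.mul_sum]
    have h2 : ∑ q, U l q (i0 l) * U l q b = ((U l)ᵀ * U l) (i0 l) b := by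
      rw [Matrix.mul_apply]
      simp only [Matrix.transpose_apply]
    rw [h2, hUo l]
    by_cases hb : b = i0 l
    · rw [hb, Matrix.one_apply_eq, mul_one, if_pos rfl]
    · rw [Matrix.one_apply_ne (fun h => hb h.symm), mul_zero,
        if_neg (fun h => hb (Fin.ext h))]
  -- big orthogonal matrix
  set BigU := Matrix.blockDiagonal' U with hBigU
  have hBigUo : BigUᵀ * BigU = 1 := by
    rw [hBigU, Matrix.blockDiagonal'_transpose, ← Matrix.blockDiagonal'_mul]
    rw [show (fun i => (U i)ᵀ * U i) = fun i => (1 : Matrix (Fin (nn i)) (Fin (nn i)) ℝ)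
      from funext fun i => hUo i]
    exact Matrix.blockDiagonal'_one
  -- conjugated matrix
  set C : Matrix (Σ j : Fin k, Fin (nn j)) (Σ j : Fin k, Fin (nn j)) ℝ :=
    Matrix.of (fun x y =>
      if x.1 = y.1 then
        (if (x.2 : ℕ) = (y.2 : ℕ) then
          α * (∑ l ∈ H.neighborFinset x.1, (nn l : ℝ)) + d x.1 x.2 else 0)
      else if H.Adj x.1 y.1 then
        (if (x.2 : ℕ) = 0 ∧ (y.2 : ℕ) = 0 then
          (1 - α) * Real.sqrt (nn x.1) * Real.sqrt (nn y.1) else 0)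
      else 0) with hC
  have hCsame : ∀ (j : Fin k) (q b : Fin (nn j)), C ⟨j, q⟩ ⟨j, b⟩ =
      if (q : ℕ) = (b : ℕ) then
        α * (∑ l ∈ H.neighborFinset j, (nn l : ℝ)) + d j q else 0 := by
    intro j q b
    rw [hC]
    simp only [Matrix.of_apply]
    rw [if_true]
  have hCdiff : ∀ (j l : Fin k), j ≠ l → ∀ (q : Fin (nn j)) (b : Fin (nn l)),
      C ⟨j, q⟩ ⟨l, b⟩ =
      if H.Adj j l then
        (if (q : ℕ) = 0 ∧ (b : ℕ) = 0 then
          (1 - α) * Real.sqrt (nn j) * Real.sqrt (nn l) else 0)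
      else 0 := by
    intro j l hjl q b
    rw [hC]
    simp only [Matrix.of_apply]
    rw [if_neg hjl]
  -- similarity
  have hconj : Aalpha (HJoin H G) α * BigU = BigU * C := by
    ext x y
    obtain ⟨j, a⟩ := x
    obtain ⟨l, b⟩ := y
    rw [Matrix.mul_apply, Matrix.mul_apply, ← Finset.univ_sigma_univ,
      Finset.sum_sigma, Finset.sum_sigma]
    have hLHS : (∑ i : Fin k, ∑ q : Fin (nn i),
        Aalpha (HJoin H G) α ⟨j, a⟩ ⟨i, q⟩ * BigU ⟨i, q⟩ ⟨l, b⟩)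
        = ∑ q : Fin (nn l), Aalpha (HJoin H G) α ⟨j, a⟩ ⟨l, q⟩ * U l q b := by
      rw [Finset.sum_eq_single l]
      · exact Finset.sum_congr rfl fun q _ => by
          rw [hBigU, Matrix.blockDiagonal'_apply_eq]
      · intro i _ hi
        apply Finset.sum_eq_zero
        intro q _
        rw [hBigU, Matrix.blockDiagonal'_apply_ne _ _ _ hi, mul_zero]
      · intro h; exact absurd (Finset.mem_univ l) h
    have hRHS : (∑ i : Fin k, ∑ q : Fin (nn i),
        BigU ⟨j, a⟩ ⟨i, q⟩ * C ⟨i, q⟩ ⟨l, b⟩)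
        = ∑ q : Fin (nn j), U j a q * C ⟨j, q⟩ ⟨l, b⟩ := by
      rw [Finset.sum_eq_single j]
      · exact Finset.sum_congr rfl fun q _ => by
          rw [hBigU, Matrix.blockDiagonal'_apply_eq]
      · intro i _ hi
        apply Finset.sum_eq_zero
        intro q _
        rw [hBigU, Matrix.blockDiagonal'_apply_ne _ _ _ (Ne.symm hi), zero_mul]
      · intro h; exact absurd (Finset.mem_univ j) h
    rw [hLHS, hRHS]
    by_cases hjl : j = l
    · subst hjl
      have e1 : ∀ q, Aalpha (HJoin H G) α ⟨j, a⟩ ⟨j, q⟩ * U j q b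
          = Aalpha (G j) α a q * U j q b
            + (if q = a then α * (∑ l ∈ H.neighborFinset j, (nn l : ℝ)) * U j q b else 0) := by
        intro q
        rw [bigA_same H rr G α hreg j a q, add_mul]
        congr 1
        by_cases h2 : a = q
        · rw [if_pos h2, if_pos h2.symm]
        · rw [if_neg h2, if_neg (Ne.symm h2), zero_mul]
      rw [Finset.sum_congr rfl (fun q _ => e1 q), Finset.sum_add_distrib,
        Finset.sum_ite_eq' Finset.univ a _, if_pos (Finset.mem_univ a)]
      have e2 : (∑ q, Aalpha (G j) α a q * U j q b)
          = (U j * Matrix.diagonal (d j)) a b := by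
        rw [← hAU j, Matrix.mul_apply]
      rw [e2, Matrix.mul_diagonal]
      have e3 : ∀ q : Fin (nn j), U j a q * C ⟨j, q⟩ ⟨j, b⟩
          = if q = b then
              U j a q * (α * (∑ l ∈ H.neighborFinset j, (nn l : ℝ)) + d j q) else 0 := by
        intro q
        rw [hCsame j q b]
        by_cases h2 : q = b
        · rw [if_pos (by rw [h2]), if_pos h2]
        · rw [if_neg (fun hc => h2 (Fin.ext hc)), if_neg h2, mul_zero]
      rw [Finset.sum_congr rfl (fun q _ => e3 q), Finset.sum_ite_eq' Finset.univ b _,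
        if_pos (Finset.mem_univ b)]
      ring
    · have e1 : ∀ q : Fin (nn l), Aalpha (HJoin H G) α ⟨j, a⟩ ⟨l, q⟩ * U l q b
          = (if H.Adj j l then (1 - α) else 0) * U l q b := by
        intro q
        rw [bigA_diff H G α j l hjl a q]
      rw [Finset.sum_congr rfl (fun q _ => e1 q), ← Finset.mul_sum, hcolsum l b]
      have e3 : ∀ q : Fin (nn j), U j a q * C ⟨j, q⟩ ⟨l, b⟩
          = if q = i0 j then
              U j a q * (if H.Adj j l then
                (if (b : ℕ) = 0 then
                  (1 - α) * Real.sqrt (nn j) * Real.sqrt (nn l) else 0) else 0) else 0 := by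
        intro q
        rw [hCdiff j l hjl q b]
        by_cases hq : q = i0 j
        · rw [if_pos hq]
          have hq0 : (q : ℕ) = 0 := by rw [hq]
          by_cases hH : H.Adj j l
          · rw [if_pos hH, if_pos hH]
            by_cases hb0 : (b : ℕ) = 0
            · rw [if_pos ⟨hq0, hb0⟩, if_pos hb0]
            · rw [if_neg (fun hc => hb0 hc.2), if_neg hb0]
          · rw [if_neg hH, if_neg hH]
        · rw [if_neg hq]
          have hq0 : (q : ℕ) ≠ 0 := fun hc => hq (Fin.ext hc)
          by_cases hH : H.Adj j l
          · rw [if_pos hH, if_neg (fun hc => hq0 hc.1), mul_zero]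
          · rw [if_neg hH, mul_zero]
      rw [Finset.sum_congr rfl (fun q _ => e3 q), Finset.sum_ite_eq' Finset.univ (i0 j) _,
        if_pos (Finset.mem_univ (i0 j)), hUcol' j a]
      by_cases hH : H.Adj j l
      · rw [if_pos hH, if_pos hH]
        by_cases hb0 : (b : ℕ) = 0
        · rw [if_pos hb0, if_pos hb0]
          rw [show (1 - α) * Real.sqrt (nn j) * Real.sqrt (nn l)
              = Real.sqrt (nn j) * ((1 - α) * Real.sqrt (nn l)) from by ring,
            ← mul_assoc, inv_mul_cancel₀ (hsqne j), one_mul]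
        · rw [if_neg hb0, if_neg hb0, mul_zero, mul_zero]
      · rw [if_neg hH, if_neg hH, zero_mul, mul_zero]
  have hcpC : (Aalpha (HJoin H G) α).charpoly = C.charpoly :=
    charpoly_of_conj _ BigU C hBigUo hconj
  set Mq : Matrix (Fin k) (Fin k) ℝ := Matrix.of fun a b : Fin k =>
      if a = b then α * (∑ l ∈ H.neighborFinset a, (nn l : ℝ)) + (rr a : ℝ)
      else if H.Adj a b then (1 - α) * Real.sqrt ((nn a : ℝ) * (nn b : ℝ))
      else 0 with hMq
  set Dd : Matrix (Σ j : Fin k, {i : Fin (nn j) // i ≠ i0 j})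
      (Σ j : Fin k, {i : Fin (nn j) // i ≠ i0 j}) ℝ :=
    Matrix.diagonal (fun x =>
      α * (∑ l ∈ H.neighborFinset x.1, (nn l : ℝ)) + d x.1 x.2.1) with hDd
  let e : (Fin k ⊕ Σ j : Fin k, {i : Fin (nn j) // i ≠ i0 j}) ≃ (Σ j : Fin k, Fin (nn j)) :=
    { toFun := Sum.elim (fun j => ⟨j, i0 j⟩) (fun p => ⟨p.1, p.2.1⟩)
      invFun := fun x => if h : x.2 = i0 x.1 then Sum.inl x.1 else Sum.inr ⟨x.1, ⟨x.2, h⟩⟩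
      left_inv := by
        rintro (j | ⟨j, i, hi⟩)
        · simp
        · simp [hi]
      right_inv := by
        rintro ⟨j, a⟩
        by_cases h : a = i0 j
        · subst h; simp
        · simp [h] }
  have hre : Matrix.reindex e.symm e.symm C = Matrix.fromBlocks Mq 0 0 Dd := by
    ext x y
    rw [Matrix.reindex_apply, Equiv.symm_symm]
    cases x with
    | inl a =>
      cases y with
      | inl b =>
        rw [Matrix.fromBlocks_apply₁₁]
        show C ⟨a, i0 a⟩ ⟨b, i0 b⟩ = Mq a b
        by_cases h : a = b
        · subst h
          rw [hCsame a (i0 a) (i0 a), if_pos rfl, hd0 a, hMq]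
          simp only [Matrix.of_apply]
          rw [if_true]
        · rw [hCdiff a b h (i0 a) (i0 b), hMq]
          simp only [Matrix.of_apply]
          rw [if_neg h]
          by_cases hH : H.Adj a b
          · rw [if_pos hH, if_pos (⟨rfl, rfl⟩ : (i0 a : ℕ) = 0 ∧ (i0 b : ℕ) = 0), if_pos hH,
              Real.sqrt_mul (Nat.cast_nonneg _), mul_assoc]
          · rw [if_neg hH, if_neg hH]
      | inr p =>
        obtain ⟨l, i, hi⟩ := p
        rw [Matrix.fromBlocks_apply₁₂, Matrix.zero_apply]
        show C ⟨a, i0 a⟩ ⟨l, i⟩ = 0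
        by_cases h : a = l
        · subst h
          rw [hCsame a (i0 a) i, if_neg (fun hc => hi (Fin.ext hc.symm))]
        · rw [hCdiff a l h (i0 a) i]
          by_cases hH : H.Adj a l
          · rw [if_pos hH, if_neg (fun hc => hi (Fin.ext hc.2))]
          · rw [if_neg hH]
    | inr p =>
      obtain ⟨j, i, hi⟩ := p
      cases y with
      | inl b =>
        rw [Matrix.fromBlocks_apply₂₁, Matrix.zero_apply]
        show C ⟨j, i⟩ ⟨b, i0 b⟩ = 0
        by_cases h : j = b
        · subst h
          rw [hCsame j i (i0 j), if_neg (fun hc => hi (Fin.ext hc))]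
        · rw [hCdiff j b h i (i0 b)]
          by_cases hH : H.Adj j b
          · rw [if_pos hH, if_neg (fun hc => hi (Fin.ext hc.1))]
          · rw [if_neg hH]
      | inr p' =>
        obtain ⟨l, i', hi'⟩ := p'
        rw [Matrix.fromBlocks_apply₂₂]
        show C ⟨j, i⟩ ⟨l, i'⟩ = Dd ⟨j, ⟨i, hi⟩⟩ ⟨l, ⟨i', hi'⟩⟩
        rw [hDd, Matrix.diagonal_apply]
        by_cases h : j = l
        · subst h
          rw [hCsame j i i']
          have hiff : (⟨j, ⟨i, hi⟩⟩ : Σ j : Fin k, {i : Fin (nn j) // i ≠ i0 j})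
              = ⟨j, ⟨i', hi'⟩⟩ ↔ i = i' := by
            simp [Sigma.mk.inj_iff]
          by_cases h2 : i = i'
          · rw [if_pos (by rw [h2]), if_pos (hiff.mpr h2)]
          · rw [if_neg (fun hc => h2 (Fin.ext hc)), if_neg (fun hc => h2 (hiff.mp hc))]
        · rw [hCdiff j l h i i',
            if_neg (fun hc => h (congrArg Sigma.fst hc))]
          by_cases hH : H.Adj j l
          · rw [if_pos hH, if_neg (fun hc => hi (Fin.ext hc.1))]
          · rw [if_neg hH]
  have hcpD : C.charpoly = Mq.charpoly * Dd.charpoly := by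
    rw [← Matrix.charpoly_reindex e.symm C, hre, Matrix.charpoly_fromBlocks_zero₁₂]
  rw [hcpC, hcpD, Polynomial.roots_mul (mul_ne_zero (Matrix.charpoly_monic Mq).ne_zero
    (Matrix.charpoly_monic Dd).ne_zero)]
  congr 1
  have hAroots : ∀ j, (Aalpha (G j) α).charpoly.roots
      = (Finset.univ.val : Multiset (Fin (nn j))).map (d j) := by
    intro j
    rw [charpoly_of_conj _ (U j) _ (hUo j) (hAU j), roots_charpoly_diagonal]
  have hterm : ∀ j : Fin k,
      (((Aalpha (G j) α).charpoly.roots).erase ((rr j : ℕ) : ℝ)).map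
        (fun μ => α * (∑ l ∈ H.neighborFinset j, (nn l : ℝ)) + μ)
      = ((Finset.univ.val : Multiset (Fin (nn j))).erase (i0 j)).map
          (fun i => α * (∑ l ∈ H.neighborFinset j, (nn l : ℝ)) + d j i) := by
    intro j
    rw [hAroots j]
    have h3 : (Finset.univ.val : Multiset (Fin (nn j)))
        = i0 j ::ₘ ((Finset.univ.val : Multiset (Fin (nn j))).erase (i0 j)) :=
      (Multiset.cons_erase (Finset.mem_val.mpr (Finset.mem_univ (i0 j)))).symm
    conv_lhs => rw [h3]
    rw [Multiset.map_cons, hd0 j, Multiset.erase_cons_head, Multiset.map_map]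
    rfl
  have hsub : ∀ j : Fin k,
      ((Finset.univ : Finset {i : Fin (nn j) // i ≠ i0 j}).val.map
          (fun i => α * (∑ l ∈ H.neighborFinset j, (nn l : ℝ)) + d j i.1))
      = ((Finset.univ.val : Multiset (Fin (nn j))).erase (i0 j)).map
          (fun i => α * (∑ l ∈ H.neighborFinset j, (nn l : ℝ)) + d j i) := by
    intro j
    have h2' : (Finset.univ : Finset {i : Fin (nn j) // i ≠ i0 j}).map
        (Function.Embedding.subtype _)
        = (Finset.univ : Finset (Fin (nn j))).erase (i0 j) := by
      ext x
      simp
    have h2 : (Finset.univ : Finset {i : Fin (nn j) // i ≠ i0 j}).val.map Subtype.val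
        = ((Finset.univ.val : Multiset (Fin (nn j))).erase (i0 j)) := by
      have := congrArg Finset.val h2'
      rw [Finset.map_val, Finset.erase_val] at this
      exact this
    rw [← h2, Multiset.map_map]
    rfl
  have hzero : ∀ j : Fin k, ¬ 1 < nn j →
      ((Finset.univ.val : Multiset (Fin (nn j))).erase (i0 j)).map
        (fun i => α * (∑ l ∈ H.neighborFinset j, (nn l : ℝ)) + d j i) = 0 := by
    intro j hj
    have h1 : nn j = 1 := by have := hpos j; omega
    have h2 : ((Finset.univ.val : Multiset (Fin (nn j))).erase (i0 j)) = 0 := by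
      rw [← Multiset.card_eq_zero,
        Multiset.card_erase_of_mem (Finset.mem_val.mpr (Finset.mem_univ _))]
      have h4 : Multiset.card (Finset.univ.val : Multiset (Fin (nn j))) = nn j := by
        rw [← Finset.card_def, Finset.card_univ, Fintype.card_fin]
      rw [h4, h1]
      rfl
    rw [h2]
    rfl
  rw [hDd, roots_charpoly_diagonal, multiset_univ_sigma,
    Finset.sum_congr rfl (fun j _ => hsub j),
    Finset.sum_congr rfl (fun j _ => hterm j)]
  exact (Finset.sum_subset (Finset.filter_subset _ _)
    (fun j _ hj => hzero j (by simpa using hj))).symm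
end

section
/- For even d ≥ 4 and α ∈ [0,1), the spectral radius ρ_α(B_{n-d+2,d/2,d/2}) equals the largest eigenvalue of the (d/2+1)×(d/2+1) symmetric tridiagonal matrix with diagonal (α, 2α, …, 2α, (n-d+1)α, 2α+n-d-1) and codiagonal (β, …, β, β√(2(n-d))), where β = 1-α. -/
open Matrix Polynomial

set_option linter.unusedVariables false

def bugAdj (p q r : ℕ) :
    (Fin q ⊕ Fin (p - 2) ⊕ Fin r) → (Fin q ⊕ Fin (p - 2) ⊕ Fin r) → Prop
  | Sum.inl i, Sum.inl j => i.val + 1 = j.val ∨ j.val + 1 = i.val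
  | Sum.inl i, Sum.inr (Sum.inl _) => i.val + 1 = q
  | Sum.inr (Sum.inl _), Sum.inl j => j.val + 1 = q
  | Sum.inr (Sum.inl a), Sum.inr (Sum.inl b) => a ≠ b
  | Sum.inr (Sum.inl _), Sum.inr (Sum.inr j) => j.val = 0
  | Sum.inr (Sum.inr j), Sum.inr (Sum.inl _) => j.val = 0
  | Sum.inr (Sum.inr i), Sum.inr (Sum.inr j) => i.val + 1 = j.val ∨ j.val + 1 = i.val
  | _, _ => False

/-- The bug `B_{p,q,r}`: obtained from `K_p` by deleting an edge `uv` and attaching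
paths `P_q` and `P_r` by one of their end vertices at `u` and `v` respectively.
Vertices: `Fin q` is the path ending at `u` (its last vertex), `Fin (p-2)` is the
rest of the clique, `Fin r` is the path starting at `v` (its first vertex). -/
def bugGraph (p q r : ℕ) : SimpleGraph (Fin q ⊕ Fin (p - 2) ⊕ Fin r) where
  Adj := bugAdj p q r
  symm := by
    constructor
    rintro (i | a | i) (j | b | j) h <;> simp_all [bugAdj] <;> tauto
  loopless := by
    constructor
    rintro (i | a | i) h <;> simp_all [bugAdj]

/-- The `(d/2+1) × (d/2+1)` symmetric tridiagonal matrix with diagonal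
`(α, 2α, …, 2α, (n-d+1)α, 2α+n-d-1)` and codiagonal `(β, …, β, β√(2(n-d)))`, `β = 1-α`. -/
noncomputable def T12 (n d : ℕ) (α : ℝ) :
    Matrix (Fin (d / 2 + 1)) (Fin (d / 2 + 1)) ℝ :=
  Matrix.of fun j l =>
    if j = l then
      (if j.val = 0 then α
       else if j.val = d / 2 then 2 * α + ((n : ℝ) - d) - 1
       else if j.val = d / 2 - 1 then ((n : ℝ) - d + 1) * α
       else 2 * α)
    else if j.val + 1 = l.val ∨ l.val + 1 = j.val then
      (if j.val = d / 2 ∨ l.val = d / 2 then (1 - α) * Real.sqrt (2 * ((n : ℝ) - d))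
       else 1 - α)
    else 0

open scoped ENNReal NNReal Pointwise

section Abstract
variable {V K : Type*} [Fintype V] [DecidableEq V] [Nonempty V] [Fintype K] [DecidableEq K]

lemma mem_spectrum_of_mulVec {T : Matrix K K ℝ} {μ : ℝ} {w : K → ℝ}
    (hw : w ≠ 0) (h : T *ᵥ w = μ • w) : μ ∈ spectrum ℝ T := by
  rw [← AlgEquiv.spectrum_eq (Matrix.toLinAlgEquiv' (R := ℝ) (n := K)),
    ← Module.End.hasEigenvalue_iff_mem_spectrum]
  exact Module.End.hasEigenvalue_of_hasEigenvector
    ⟨Module.End.mem_eigenspace_iff.mpr (by simpa [Matrix.toLinAlgEquiv'_apply] using h), hw⟩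

lemma exists_mulVec_of_mem_spectrum {T : Matrix K K ℝ} {μ : ℝ} (h : μ ∈ spectrum ℝ T) :
    ∃ w : K → ℝ, w ≠ 0 ∧ T *ᵥ w = μ • w := by
  rw [← AlgEquiv.spectrum_eq (Matrix.toLinAlgEquiv' (R := ℝ) (n := K)),
    ← Module.End.hasEigenvalue_iff_mem_spectrum] at h
  obtain ⟨w, hw⟩ := h.exists_hasEigenvector
  exact ⟨w, hw.2, by simpa [Matrix.toLinAlgEquiv'_apply] using
    Module.End.mem_eigenspace_iff.mp hw.1⟩

lemma dot_abs_le (A : Matrix V V ℝ) (hAnn : ∀ v w, 0 ≤ A v w) (x : V → ℝ) :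
    |x ⬝ᵥ (A *ᵥ x)| ≤ (fun v => |x v|) ⬝ᵥ (A *ᵥ fun v => |x v|) := by
  simp only [dotProduct, mulVec]
  calc |∑ v, x v * ∑ w, A v w * x w| ≤ ∑ v, |x v * ∑ w, A v w * x w| :=
        Finset.abs_sum_le_sum_abs _ _
    _ ≤ ∑ v, |x v| * ∑ w, A v w * |x w| := by
        refine Finset.sum_le_sum fun v _ => ?_
        rw [abs_mul]
        refine mul_le_mul_of_nonneg_left ?_ (abs_nonneg _)
        calc |∑ w, A v w * x w| ≤ ∑ w, |A v w * x w| := Finset.abs_sum_le_sum_abs _ _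
          _ = ∑ w, A v w * |x w| := by
              refine Finset.sum_congr rfl fun w _ => ?_
              rw [abs_mul, abs_of_nonneg (hAnn v w)]

lemma abstract_main (A : Matrix V V ℝ) (T : Matrix K K ℝ) (S : Matrix V K ℝ)
    (hAs : Aᵀ = A) (hTs : Tᵀ = T)
    (hAnn : ∀ v w, 0 ≤ A v w) (hSnn : ∀ v k, 0 ≤ S v k)
    (hScov : ∀ v, ∃ k, 0 < S v k)
    (hStS : Sᵀ * S = 1)
    (hAS : A * S = S * T) :
    (spectralRadius ℝ A).toReal ∈ spectrum ℝ T ∧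
      ∀ μ ∈ spectrum ℝ T, μ ≤ (spectralRadius ℝ A).toReal := by
  have hA : A.IsHermitian := by
    rw [Matrix.IsHermitian, Matrix.conjTranspose_eq_transpose_of_trivial]; exact hAs
  obtain ⟨i₀, -, hi₀⟩ := Finset.exists_max_image (Finset.univ : Finset V) hA.eigenvalues
    ⟨Classical.arbitrary V, Finset.mem_univ _⟩
  set lmax := hA.eigenvalues i₀ with hlmax_def
  have hmax : ∀ i, hA.eigenvalues i ≤ lmax := fun i => hi₀ i (Finset.mem_univ _)
  have hspecA : spectrum ℝ A = Set.range hA.eigenvalues := hA.spectrum_real_eq_range_eigenvalues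
  -- positive semidefiniteness of lmax • 1 - A
  have hM : (lmax • (1 : Matrix V V ℝ) - A).IsHermitian := by
    refine Matrix.IsHermitian.sub ?_ hA
    rw [Matrix.IsHermitian, Matrix.conjTranspose_smul, Matrix.conjTranspose_one]
    simp
  have hMpsd : (lmax • (1 : Matrix V V ℝ) - A).PosSemidef := by
    refine hM.posSemidef_iff_eigenvalues_nonneg.mpr (show ∀ i, (0:ℝ) ≤ hM.eigenvalues i from fun i => ?_)
    have hmem := hM.eigenvalues_mem_spectrum_real i
    have hmem2 : hM.eigenvalues i ∈ ({lmax} : Set ℝ) - spectrum ℝ A := by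
      rw [spectrum.singleton_sub_eq, Algebra.algebraMap_eq_smul_one]
      exact hmem
    obtain ⟨a, ha, b, hb, hab⟩ := Set.mem_sub.mp hmem2
    rw [Set.mem_singleton_iff] at ha
    rw [hspecA] at hb
    obtain ⟨j, rfl⟩ := hb
    subst ha
    rw [← hab]
    have := hmax j
    linarith
  -- Rayleigh upper bound
  have hray : ∀ x : V → ℝ, x ⬝ᵥ (A *ᵥ x) ≤ lmax * (x ⬝ᵥ x) := by
    intro x
    have h0 := hMpsd.dotProduct_mulVec_nonneg x
    rw [star_trivial, sub_mulVec, smul_mulVec, one_mulVec, dotProduct_sub,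
      dotProduct_smul, smul_eq_mul] at h0
    linarith
  -- unit dot products of eigenvectors
  have hunit : ∀ i : V, (⇑(hA.eigenvectorBasis i) ⬝ᵥ ⇑(hA.eigenvectorBasis i)) = 1 := by
    intro i
    have h1 : ‖hA.eigenvectorBasis i‖ = 1 := hA.eigenvectorBasis.orthonormal.1 i
    have h2 : (⇑(hA.eigenvectorBasis i) ⬝ᵥ ⇑(hA.eigenvectorBasis i))
        = inner (𝕜 := ℝ) (hA.eigenvectorBasis i) (hA.eigenvectorBasis i) := by
      rw [PiLp.inner_apply]
      simp [dotProduct, sq]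
    rw [h2, real_inner_self_eq_norm_sq, h1]; norm_num
  have hquad : ∀ i : V, ⇑(hA.eigenvectorBasis i) ⬝ᵥ (A *ᵥ ⇑(hA.eigenvectorBasis i))
      = hA.eigenvalues i := by
    intro i
    rw [hA.mulVec_eigenvectorBasis, dotProduct_smul, smul_eq_mul, hunit, mul_one]
  have habs : ∀ i : V, |hA.eigenvalues i| ≤ lmax := by
    intro i
    set x : V → ℝ := ⇑(hA.eigenvectorBasis i) with hx
    set y : V → ℝ := fun v => |x v| with hy
    have hyy : y ⬝ᵥ y = 1 := by
      have : y ⬝ᵥ y = x ⬝ᵥ x := by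
        simp only [dotProduct, hy, abs_mul_abs_self]
      rw [this, hunit i]
    calc |hA.eigenvalues i| = |x ⬝ᵥ (A *ᵥ x)| := by rw [hquad i]
      _ ≤ y ⬝ᵥ (A *ᵥ y) := dot_abs_le A hAnn x
      _ ≤ lmax * (y ⬝ᵥ y) := hray y
      _ = lmax := by rw [hyy, mul_one]
  have hlmax0 : 0 ≤ lmax := le_trans (abs_nonneg _) (habs i₀)
  -- spectral radius equals lmax
  have hsrt : (spectralRadius ℝ A).toReal = lmax := by
    have hsr : spectralRadius ℝ A = ENNReal.ofReal lmax := by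
      unfold spectralRadius
      apply le_antisymm
      · refine iSup₂_le fun μ hμ => ?_
        rw [hspecA] at hμ
        obtain ⟨i, rfl⟩ := hμ
        rw [← enorm_eq_nnnorm, Real.enorm_eq_ofReal_abs]
        exact ENNReal.ofReal_le_ofReal (habs i)
      · have hmem : lmax ∈ spectrum ℝ A := hspecA ▸ ⟨i₀, rfl⟩
        have hcast : ENNReal.ofReal lmax = ((‖lmax‖₊ : NNReal) : ENNReal) := by
          rw [← enorm_eq_nnnorm, Real.enorm_eq_ofReal_abs, abs_of_nonneg hlmax0]
        rw [hcast]
        exact le_iSup₂ (f := fun μ (_ : μ ∈ spectrum ℝ A) => ((‖μ‖₊ : NNReal) : ENNReal)) lmax hmem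
    rw [hsr, ENNReal.toReal_ofReal hlmax0]
  -- nonnegative top eigenvector
  set x₀ : V → ℝ := ⇑(hA.eigenvectorBasis i₀) with hx₀def
  have hx₀ : A *ᵥ x₀ = lmax • x₀ := hA.mulVec_eigenvectorBasis i₀
  have hx₀ne : x₀ ≠ 0 := by
    intro h
    have h1 : ‖hA.eigenvectorBasis i₀‖ = 1 := hA.eigenvectorBasis.orthonormal.1 i₀
    have : hA.eigenvectorBasis i₀ = 0 := by
      ext v; exact congrFun h v
    rw [this, norm_zero] at h1
    norm_num at h1
  set y₀ : V → ℝ := fun v => |x₀ v| with hy₀def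
  have hy₀nn : ∀ v, 0 ≤ y₀ v := fun v => abs_nonneg _
  have hy₀ne : y₀ ≠ 0 := by
    intro h
    exact hx₀ne (funext fun v => abs_eq_zero.mp (congrFun h v))
  have hy₀ : A *ᵥ y₀ = lmax • y₀ := by
    have h1 : x₀ ⬝ᵥ (A *ᵥ x₀) = lmax * (x₀ ⬝ᵥ x₀) := by
      rw [hx₀, dotProduct_smul, smul_eq_mul]
    have h2 : x₀ ⬝ᵥ (A *ᵥ x₀) ≤ y₀ ⬝ᵥ (A *ᵥ y₀) :=
      le_trans (le_abs_self _) (dot_abs_le A hAnn x₀)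
    have h3 : y₀ ⬝ᵥ y₀ = x₀ ⬝ᵥ x₀ := by
      simp only [dotProduct, hy₀def, abs_mul_abs_self]
    have h4 : y₀ ⬝ᵥ (A *ᵥ y₀) ≤ lmax * (y₀ ⬝ᵥ y₀) := hray y₀
    have h5 : star y₀ ⬝ᵥ ((lmax • (1 : Matrix V V ℝ) - A) *ᵥ y₀) = 0 := by
      rw [star_trivial, sub_mulVec, smul_mulVec, one_mulVec, dotProduct_sub,
        dotProduct_smul, smul_eq_mul]
      have h6 := hMpsd.dotProduct_mulVec_nonneg y₀
      rw [star_trivial, sub_mulVec, smul_mulVec, one_mulVec, dotProduct_sub,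
        dotProduct_smul, smul_eq_mul] at h6
      rw [h3] at h4 ⊢
      linarith
    have h7 := (hMpsd.dotProduct_mulVec_zero_iff y₀).mp h5
    rw [sub_mulVec, smul_mulVec, one_mulVec, sub_eq_zero] at h7
    exact h7.symm
  -- push to the quotient
  have hTS : T * Sᵀ = Sᵀ * A := by
    have h := congrArg Matrix.transpose hAS
    rw [Matrix.transpose_mul, Matrix.transpose_mul, hAs, hTs] at h
    exact h.symm
  have hTw : T *ᵥ (Sᵀ *ᵥ y₀) = lmax • (Sᵀ *ᵥ y₀) := by
    rw [mulVec_mulVec, hTS, ← mulVec_mulVec, hy₀, mulVec_smul]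
  have hwne : Sᵀ *ᵥ y₀ ≠ 0 := by
    obtain ⟨v₀, hv₀⟩ := Function.ne_iff.mp hy₀ne
    obtain ⟨k, hk⟩ := hScov v₀
    intro h
    have hzero : (Sᵀ *ᵥ y₀) k = 0 := by rw [h]; rfl
    have hpos : 0 < (Sᵀ *ᵥ y₀) k := by
      simp only [mulVec, dotProduct, transpose_apply]
      refine Finset.sum_pos' (fun v _ => mul_nonneg (hSnn v k) (hy₀nn v)) ⟨v₀, Finset.mem_univ _, ?_⟩
      exact mul_pos hk (lt_of_le_of_ne (hy₀nn v₀) (Ne.symm hv₀))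
    rw [hzero] at hpos
    exact lt_irrefl 0 hpos
  constructor
  · rw [hsrt]
    exact mem_spectrum_of_mulVec hwne hTw
  · intro μ hμ
    obtain ⟨w, hwne', hTw'⟩ := exists_mulVec_of_mem_spectrum hμ
    have hASw : A *ᵥ (S *ᵥ w) = μ • (S *ᵥ w) := by
      rw [mulVec_mulVec, hAS, ← mulVec_mulVec, hTw', mulVec_smul]
    have hSw : S *ᵥ w ≠ 0 := by
      intro h
      apply hwne'
      have := congrArg (fun z => Sᵀ *ᵥ z) h
      simpa [mulVec_mulVec, hStS] using this
    have hμA : μ ∈ spectrum ℝ A := mem_spectrum_of_mulVec hSw hASw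
    rw [hspecA] at hμA
    obtain ⟨i, rfl⟩ := hμA
    rw [hsrt]
    exact hmax i

end Abstract

-- ===== new defs =====

def bugG (q m : ℕ) : SimpleGraph (Fin q ⊕ Fin m ⊕ Fin q) := bugGraph (m + 2) q q

noncomputable def Smat (q m : ℕ) : Matrix (Fin q ⊕ Fin m ⊕ Fin q) (Fin (q + 1)) ℝ :=
  Matrix.of fun v k => match v with
    | Sum.inl i => if (k : ℕ) = (i : ℕ) then (Real.sqrt 2)⁻¹ else 0
    | Sum.inr (Sum.inl _) => if (k : ℕ) = q then (Real.sqrt m)⁻¹ else 0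
    | Sum.inr (Sum.inr j) => if (k : ℕ) = q - 1 - (j : ℕ) then (Real.sqrt 2)⁻¹ else 0

noncomputable def Tmat (q m : ℕ) (α : ℝ) : Matrix (Fin (q + 1)) (Fin (q + 1)) ℝ :=
  Matrix.of fun j l =>
    if j = l then
      (if (j : ℕ) = 0 then α
       else if (j : ℕ) = q then 2 * α + (m : ℝ) - 1
       else if (j : ℕ) = q - 1 then ((m : ℝ) + 1) * α
       else 2 * α)
    else if (j : ℕ) + 1 = (l : ℕ) ∨ (l : ℕ) + 1 = (j : ℕ) then
      (if (j : ℕ) = q ∨ (l : ℕ) = q then (1 - α) * Real.sqrt (2 * (m : ℝ))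
       else 1 - α)
    else 0

noncomputable def dqv (q m : ℕ) : Fin (q + 1) → ℝ := fun k =>
  if (k : ℕ) = 0 then 1 else if (k : ℕ) = q ∨ (k : ℕ) = q - 1 then (m : ℝ) + 1 else 2

noncomputable def Bq (q m : ℕ) : Matrix (Fin (q + 1)) (Fin (q + 1)) ℝ :=
  Matrix.of fun j l =>
    if j = l then (if (j : ℕ) = q then (m : ℝ) - 1 else 0)
    else if (j : ℕ) + 1 = (l : ℕ) ∨ (l : ℕ) + 1 = (j : ℕ) then
      (if (j : ℕ) = q ∨ (l : ℕ) = q then Real.sqrt (2 * (m : ℝ)) else 1)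
    else 0

noncomputable def degr (q m : ℕ) : (Fin q ⊕ Fin m ⊕ Fin q) → ℝ
  | Sum.inl i => if (i : ℕ) = 0 then 1 else if (i : ℕ) = q - 1 then (m : ℝ) + 1 else 2
  | Sum.inr (Sum.inl _) => (m : ℝ) + 1
  | Sum.inr (Sum.inr j) => if (j : ℕ) = q - 1 then 1 else if (j : ℕ) = 0 then (m : ℝ) + 1 else 2

open Classical in
noncomputable def adjm (q m : ℕ) : Matrix (Fin q ⊕ Fin m ⊕ Fin q) (Fin q ⊕ Fin m ⊕ Fin q) ℝ :=
  Matrix.of fun v w => if (bugG q m).Adj v w then 1 else 0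

-- ===== adjacency unfolding =====

lemma bugG_ll (q m : ℕ) (i j : Fin q) :
    (bugG q m).Adj (Sum.inl i) (Sum.inl j) ↔ ((i : ℕ) + 1 = (j : ℕ) ∨ (j : ℕ) + 1 = (i : ℕ)) :=
  Iff.rfl

lemma bugG_lc (q m : ℕ) (i : Fin q) (a : Fin m) :
    (bugG q m).Adj (Sum.inl i) (Sum.inr (Sum.inl a)) ↔ (i : ℕ) + 1 = q := Iff.rfl

lemma bugG_lr (q m : ℕ) (i : Fin q) (j : Fin q) :
    (bugG q m).Adj (Sum.inl i) (Sum.inr (Sum.inr j)) ↔ False := Iff.rfl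

lemma bugG_cl (q m : ℕ) (a : Fin m) (j : Fin q) :
    (bugG q m).Adj (Sum.inr (Sum.inl a)) (Sum.inl j) ↔ (j : ℕ) + 1 = q := Iff.rfl

lemma bugG_cc (q m : ℕ) (a b : Fin m) :
    (bugG q m).Adj (Sum.inr (Sum.inl a)) (Sum.inr (Sum.inl b)) ↔ a ≠ b := Iff.rfl

lemma bugG_cr (q m : ℕ) (a : Fin m) (j : Fin q) :
    (bugG q m).Adj (Sum.inr (Sum.inl a)) (Sum.inr (Sum.inr j)) ↔ (j : ℕ) = 0 := Iff.rfl

lemma bugG_rl (q m : ℕ) (j : Fin q) (i : Fin q) :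
    (bugG q m).Adj (Sum.inr (Sum.inr j)) (Sum.inl i) ↔ False := Iff.rfl

lemma bugG_rc (q m : ℕ) (j : Fin q) (a : Fin m) :
    (bugG q m).Adj (Sum.inr (Sum.inr j)) (Sum.inr (Sum.inl a)) ↔ (j : ℕ) = 0 := Iff.rfl

lemma bugG_rr (q m : ℕ) (i j : Fin q) :
    (bugG q m).Adj (Sum.inr (Sum.inr i)) (Sum.inr (Sum.inr j)) ↔
      ((i : ℕ) + 1 = (j : ℕ) ∨ (j : ℕ) + 1 = (i : ℕ)) := Iff.rfl

section Helpers

lemma ite_ite' (A B : Prop) [Decidable A] [Decidable B] (c : ℝ) :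
    (if A then (if B then c else 0) else 0) = if A ∧ B then c else 0 := by
  split_ifs with h1 h2 h3 <;> simp_all

lemma sum_ite_cond (q : ℕ) (P : ℕ → Prop) [DecidablePred P] (t : ℕ) (c : ℝ)
    (h : ∀ i, i < q → (P i ↔ i = t)) :
    (∑ i : Fin q, if P (i : ℕ) then c else 0) = if t < q then c else 0 := by
  rw [Fin.sum_univ_eq_sum_range (fun i => if P i then c else 0) q]
  rw [Finset.sum_congr rfl (fun i hi => by
    rw [Finset.mem_range] at hi
    simp only [h i hi] : ∀ i ∈ Finset.range q,
      (if P i then c else 0) = if i = t then c else 0)]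
  simp [Finset.sum_ite_eq', Finset.mem_range]

lemma sum_ite_zero' (q : ℕ) (P : ℕ → Prop) [DecidablePred P] (c : ℝ)
    (h : ∀ i, i < q → ¬ P i) :
    (∑ i : Fin q, if P (i : ℕ) then c else 0) = 0 := by
  refine Finset.sum_eq_zero fun i _ => ?_
  rw [if_neg (h i i.isLt)]

lemma sum_ite_cond2 (q : ℕ) (P : ℕ → Prop) [DecidablePred P] (t s : ℕ) (c : ℝ) (hts : t ≠ s)
    (h : ∀ i, i < q → (P i ↔ (i = t ∨ i = s))) :
    (∑ i : Fin q, if P (i : ℕ) then c else 0)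
      = (if t < q then c else 0) + (if s < q then c else 0) := by
  rw [Fin.sum_univ_eq_sum_range (fun i => if P i then c else 0) q]
  rw [Finset.sum_congr rfl (fun i hi => by
    rw [Finset.mem_range] at hi
    have := h i hi
    split_ifs with h1 h2 h3 h4 h5 h6 h7 <;> simp_all <;> omega : ∀ i ∈ Finset.range q,
      (if P i then c else 0) = (if i = t then c else 0) + (if i = s then c else 0))]
  rw [Finset.sum_add_distrib]
  simp [Finset.sum_ite_eq', Finset.mem_range]

lemma sum_const_ite (m : ℕ) (C : Prop) [Decidable C] (c : ℝ) :
    (∑ _a : Fin m, if C then c else 0) = if C then (m : ℝ) * c else 0 := by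
  split_ifs <;> simp [Finset.sum_const, mul_comm]

lemma sum_ne_ite (m : ℕ) (a : Fin m) (c : ℝ) :
    (∑ b : Fin m, if b ≠ a then c else 0) = ((m : ℝ) - 1) * c := by
  have h : ∀ b : Fin m, (if b ≠ a then c else 0) = c - (if b = a then c else 0) := by
    intro b; split_ifs <;> simp_all
  rw [Finset.sum_congr rfl fun b _ => h b, Finset.sum_sub_distrib]
  simp [Finset.sum_const, Finset.sum_ite_eq', mul_comm, sub_mul]
  ring

lemma sum_pin (q : ℕ) (t : ℕ) (ht : t < q + 1) (f : Fin (q + 1) → ℝ) :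
    (∑ l : Fin (q + 1), if (l : ℕ) = t then f l else 0) = f ⟨t, ht⟩ := by
  rw [Finset.sum_eq_single (⟨t, ht⟩ : Fin (q + 1))]
  · simp
  · intro b _ hb
    rw [if_neg (fun hbt => hb (Fin.ext hbt))]
  · intro h; exact absurd (Finset.mem_univ _) h

end Helpers


-- ===== sqrt identities =====

lemma key_m_rm {m : ℕ} (hm : 1 ≤ m) :
    (m : ℝ) * (Real.sqrt m)⁻¹ = (Real.sqrt 2)⁻¹ * Real.sqrt (2 * (m : ℝ)) := by
  have hm0 : (0 : ℝ) < m := by exact_mod_cast hm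
  have hsm : 0 < Real.sqrt m := Real.sqrt_pos.mpr hm0
  have h2 : 0 < Real.sqrt 2 := Real.sqrt_pos.mpr (by norm_num)
  have hmm : Real.sqrt m * Real.sqrt m = m := Real.mul_self_sqrt hm0.le
  rw [Real.sqrt_mul (by norm_num : (0:ℝ) ≤ 2) (m : ℝ)]
  field_simp
  rw [Real.sq_sqrt hm0.le]

lemma key_2_r2 {m : ℕ} (hm : 1 ≤ m) :
    2 * (Real.sqrt 2)⁻¹ = (Real.sqrt m)⁻¹ * Real.sqrt (2 * (m : ℝ)) := by
  have hm0 : (0 : ℝ) < m := by exact_mod_cast hm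
  have hsm : 0 < Real.sqrt m := Real.sqrt_pos.mpr hm0
  have h2 : 0 < Real.sqrt 2 := Real.sqrt_pos.mpr (by norm_num)
  have h22 : Real.sqrt 2 * Real.sqrt 2 = 2 := Real.mul_self_sqrt (by norm_num)
  rw [Real.sqrt_mul (by norm_num : (0:ℝ) ≤ 2) (m : ℝ)]
  field_simp
  rw [Real.sq_sqrt (by norm_num : (0:ℝ) ≤ 2)]

lemma key_r2_sq : 2 * ((Real.sqrt 2)⁻¹ * (Real.sqrt 2)⁻¹) = 1 := by
  have h22 : Real.sqrt 2 * Real.sqrt 2 = 2 := Real.mul_self_sqrt (by norm_num)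
  rw [← mul_inv, h22]
  norm_num

lemma key_rm_sq {m : ℕ} (hm : 1 ≤ m) :
    (m : ℝ) * ((Real.sqrt m)⁻¹ * (Real.sqrt m)⁻¹) = 1 := by
  have hm0 : (0 : ℝ) < m := by exact_mod_cast hm
  have hmm : Real.sqrt m * Real.sqrt m = m := Real.mul_self_sqrt hm0.le
  rw [← mul_inv, hmm]
  exact mul_inv_cancel₀ (ne_of_gt hm0)

-- ===== T-matrix decomposition =====

lemma Tmat_decomp (q m : ℕ) (hq : 2 ≤ q) (α : ℝ) :
    Tmat q m α = α • Matrix.diagonal (dqv q m) + (1 - α) • Bq q m := by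
  ext j l
  simp only [Tmat, Bq, dqv, Matrix.of_apply, Matrix.add_apply, Matrix.smul_apply,
    Matrix.diagonal_apply, smul_eq_mul]
  split_ifs <;> try ring
  all_goals (exfalso; omega)

-- ===== Tmat symmetric =====

lemma Tmat_symm (q m : ℕ) (α : ℝ) : (Tmat q m α)ᵀ = Tmat q m α := by
  ext j l
  simp only [Matrix.transpose_apply, Tmat, Matrix.of_apply]
  split_ifs <;> try rfl
  all_goals (try (exfalso; omega)) <;> simp_all

-- ===== S^T * S = 1 =====

lemma StS (q m : ℕ) (hq : 2 ≤ q) (hm : 1 ≤ m) : (Smat q m)ᵀ * Smat q m = 1 := by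
  ext k l
  rw [Matrix.mul_apply]
  simp only [Matrix.transpose_apply, Smat, Matrix.of_apply]
  rw [Fintype.sum_sum_type, Fintype.sum_sum_type]
  simp only [mul_ite, ite_mul, zero_mul, mul_zero]
  rcases eq_or_ne k l with rfl | hkl
  · simp only [ite_ite']
    rw [sum_ite_cond q (fun x => (k : ℕ) = x ∧ (k : ℕ) = x) (k : ℕ)
        ((Real.sqrt 2)⁻¹ * (Real.sqrt 2)⁻¹) (by omega)]
    rw [sum_const_ite m ((k : ℕ) = q ∧ (k : ℕ) = q) ((Real.sqrt m)⁻¹ * (Real.sqrt m)⁻¹)]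
    by_cases hk : (k : ℕ) < q
    · rw [sum_ite_cond q (fun x => (k : ℕ) = q - 1 - x ∧ (k : ℕ) = q - 1 - x)
          (q - 1 - (k : ℕ)) ((Real.sqrt 2)⁻¹ * (Real.sqrt 2)⁻¹) (by omega)]
      rw [if_pos hk, if_neg (by omega : ¬ ((k : ℕ) = q ∧ (k : ℕ) = q)),
        if_pos (by omega : q - 1 - (k : ℕ) < q)]
      rw [Matrix.one_apply_eq]
      linarith [key_r2_sq]
    · have hkq : (k : ℕ) = q := by omega
      rw [sum_ite_zero' q (fun x => (k : ℕ) = q - 1 - x ∧ (k : ℕ) = q - 1 - x)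
          ((Real.sqrt 2)⁻¹ * (Real.sqrt 2)⁻¹) (by omega)]
      rw [if_neg hk, if_pos (by omega : (k : ℕ) = q ∧ (k : ℕ) = q)]
      rw [Matrix.one_apply_eq]
      rw [key_rm_sq hm]
      ring
  · have hv : (k : ℕ) ≠ (l : ℕ) := fun h => hkl (Fin.ext h)
    simp only [ite_ite']
    rw [sum_ite_zero' q (fun x => (l : ℕ) = x ∧ (k : ℕ) = x) _ (by omega)]
    rw [sum_ite_zero' q (fun x => (l : ℕ) = q - 1 - x ∧ (k : ℕ) = q - 1 - x) _ (by omega)]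
    rw [sum_const_ite m ((l : ℕ) = q ∧ (k : ℕ) = q) ((Real.sqrt m)⁻¹ * (Real.sqrt m)⁻¹),
      if_neg (by omega : ¬ ((l : ℕ) = q ∧ (k : ℕ) = q))]
    rw [Matrix.one_apply_ne hkl]
    ring

-- ===== more sum helpers =====

lemma sum_ne_ite2 (m : ℕ) (a : Fin m) (c : ℝ) :
    (∑ b : Fin m, if a ≠ b then c else 0) = ((m : ℝ) - 1) * c := by
  rw [Finset.sum_congr rfl (fun b _ => if_congr ne_comm rfl rfl :
    ∀ b ∈ Finset.univ, (if a ≠ b then c else 0) = if b ≠ a then c else 0)]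
  exact sum_ne_ite m a c

lemma sum_ne_and_ite (m : ℕ) (a : Fin m) (C : Prop) [Decidable C] (c : ℝ) :
    (∑ b : Fin m, if a ≠ b ∧ C then c else 0) = if C then ((m : ℝ) - 1) * c else 0 := by
  by_cases hC : C
  · rw [if_pos hC, ← sum_ne_ite2 m a c]
    exact Finset.sum_congr rfl fun b _ => by simp [hC]
  · rw [if_neg hC]
    exact Finset.sum_eq_zero fun b _ => by simp [hC]

lemma Bq_val (q m : ℕ) (t : ℕ) (ht : t < q + 1) (k : Fin (q + 1)) :
    Bq q m ⟨t, ht⟩ k =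
      if t = (k : ℕ) then (if t = q then (m : ℝ) - 1 else 0)
      else if (t + 1 = (k : ℕ) ∨ (k : ℕ) + 1 = t) then
        (if t = q ∨ (k : ℕ) = q then Real.sqrt (2 * (m : ℝ)) else 1)
      else 0 := by
  simp only [Bq, Matrix.of_apply, Fin.ext_iff]

-- ===== degree computation =====

open Classical in
lemma degree_eq_degr (q m : ℕ) (hq : 2 ≤ q) (v : Fin q ⊕ Fin m ⊕ Fin q) :
    ((bugG q m).degree v : ℝ) = degr q m v := by
  have h0 : ((bugG q m).degree v : ℝ) = ∑ w, if (bugG q m).Adj v w then (1 : ℝ) else 0 := by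
    rw [show (bugG q m).degree v = ((bugG q m).neighborFinset v).card from rfl,
      SimpleGraph.neighborFinset_eq_filter, Finset.natCast_card_filter]
  rw [h0, Fintype.sum_sum_type, Fintype.sum_sum_type]
  rcases v with i | a | j
  · have hiq : (i : ℕ) < q := i.isLt
    simp only [bugG_ll, bugG_lc, bugG_lr, if_false, Finset.sum_const_zero, add_zero]
    rw [sum_const_ite m ((i : ℕ) + 1 = q) 1]
    by_cases h0' : (i : ℕ) = 0
    · rw [sum_ite_cond q (fun x => (i : ℕ) + 1 = x ∨ x + 1 = (i : ℕ)) 1 1 (by omega)]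
      rw [if_pos (by omega : 1 < q), if_neg (by omega : ¬ (i : ℕ) + 1 = q)]
      simp [degr, h0']
    · by_cases h1' : (i : ℕ) = q - 1
      · rw [sum_ite_cond q (fun x => (i : ℕ) + 1 = x ∨ x + 1 = (i : ℕ)) (q - 2) 1 (by omega)]
        rw [if_pos (by omega : q - 2 < q), if_pos (by omega : (i : ℕ) + 1 = q)]
        simp only [degr, if_neg h0', if_pos h1']
        ring
      · rw [sum_ite_cond2 q (fun x => (i : ℕ) + 1 = x ∨ x + 1 = (i : ℕ))
          ((i : ℕ) + 1) ((i : ℕ) - 1) 1 (by omega) (by omega)]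
        rw [if_pos (by omega : (i : ℕ) + 1 < q), if_pos (by omega : (i : ℕ) - 1 < q),
          if_neg (by omega : ¬ (i : ℕ) + 1 = q)]
        simp only [degr, if_neg h0', if_neg h1']
        ring
  · simp only [bugG_cl, bugG_cc, bugG_cr]
    rw [sum_ite_cond q (fun x => x + 1 = q) (q - 1) 1 (by omega)]
    rw [sum_ite_cond q (fun x => x = 0) 0 1 (by omega)]
    rw [sum_ne_ite2 m a 1]
    rw [if_pos (by omega : q - 1 < q), if_pos (by omega : 0 < q)]
    simp only [degr]
    ring
  · have hjq : (j : ℕ) < q := j.isLt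
    simp only [bugG_rl, bugG_rc, bugG_rr, if_false, Finset.sum_const_zero, zero_add]
    rw [sum_const_ite m ((j : ℕ) = 0) 1]
    by_cases h0' : (j : ℕ) = 0
    · rw [sum_ite_cond q (fun x => (j : ℕ) + 1 = x ∨ x + 1 = (j : ℕ)) 1 1 (by omega)]
      rw [if_pos (by omega : 1 < q), if_pos h0']
      simp only [degr, if_neg (by omega : ¬ (j : ℕ) = q - 1), if_pos h0']
      ring
    · by_cases h1' : (j : ℕ) = q - 1
      · rw [sum_ite_cond q (fun x => (j : ℕ) + 1 = x ∨ x + 1 = (j : ℕ)) (q - 2) 1 (by omega)]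
        rw [if_pos (by omega : q - 2 < q), if_neg h0']
        simp only [degr, if_pos h1']
        ring
      · rw [sum_ite_cond2 q (fun x => (j : ℕ) + 1 = x ∨ x + 1 = (j : ℕ))
          ((j : ℕ) + 1) ((j : ℕ) - 1) 1 (by omega) (by omega)]
        rw [if_pos (by omega : (j : ℕ) + 1 < q), if_pos (by omega : (j : ℕ) - 1 < q),
          if_neg h0']
        simp only [degr, if_neg h0', if_neg h1']
        ring

-- ===== Aalpha decomposition =====

lemma Aalpha_eq_s12 (q m : ℕ) (hq : 2 ≤ q) (α : ℝ) :
    Aalpha (bugG q m) α = α • Matrix.diagonal (degr q m) + (1 - α) • adjm q m := by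
  classical
  ext v w
  unfold Aalpha
  simp only [Matrix.add_apply, Matrix.smul_apply, smul_eq_mul, Matrix.diagonal_apply,
    SimpleGraph.adjMatrix_apply, adjm, Matrix.of_apply]
  by_cases hvw : v = w <;> by_cases h : (bugG q m).Adj v w <;>
    simp only [hvw, h, if_true, if_false, eq_self_iff_true] <;>
    rw [← degree_eq_degr q m hq w] <;> congr!

-- ===== diagonal identity =====

lemma DS_eq (q m : ℕ) (hq : 2 ≤ q) :
    Matrix.diagonal (degr q m) * Smat q m = Smat q m * Matrix.diagonal (dqv q m) := by
  ext v k
  rw [Matrix.diagonal_mul, Matrix.mul_diagonal]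
  have hk1 : (k : ℕ) < q + 1 := k.isLt
  rcases v with i | a | j <;> simp only [Smat, Matrix.of_apply]
  · have hiq : (i : ℕ) < q := i.isLt
    by_cases hk : (k : ℕ) = (i : ℕ)
    · rw [if_pos hk]
      have hd : degr q m (Sum.inl i) = dqv q m k := by
        simp only [degr, dqv]
        split_ifs <;> (try rfl) <;> (exfalso; omega)
      rw [hd]; ring
    · rw [if_neg hk]; ring
  · by_cases hk : (k : ℕ) = q
    · rw [if_pos hk]
      have hd : degr q m (Sum.inr (Sum.inl a) : Fin q ⊕ Fin m ⊕ Fin q) = dqv q m k := by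
        simp only [degr, dqv]
        split_ifs <;> (try rfl) <;> (exfalso; omega)
      rw [hd]; ring
    · rw [if_neg hk]; ring
  · have hjq : (j : ℕ) < q := j.isLt
    by_cases hk : (k : ℕ) = q - 1 - (j : ℕ)
    · rw [if_pos hk]
      have hd : degr q m (Sum.inr (Sum.inr j) : Fin q ⊕ Fin m ⊕ Fin q) = dqv q m k := by
        simp only [degr, dqv]
        split_ifs <;> (try rfl) <;> (exfalso; omega)
      rw [hd]; ring
    · rw [if_neg hk]; ring

-- ===== adjacency identity =====

lemma AdjS_eq (q m : ℕ) (hq : 2 ≤ q) (hm : 1 ≤ m) :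
    adjm q m * Smat q m = Smat q m * Bq q m := by
  classical
  ext v k
  rw [Matrix.mul_apply, Matrix.mul_apply]
  have hk1 : (k : ℕ) < q + 1 := k.isLt
  rcases v with i | a | j
  · -- left path vertex
    have hiq : (i : ℕ) < q := i.isLt
    have hR : (∑ l : Fin (q + 1), Smat q m (Sum.inl i) l * Bq q m l k)
        = (Real.sqrt 2)⁻¹ * Bq q m ⟨(i : ℕ), by omega⟩ k := by
      rw [← sum_pin q (i : ℕ) (by omega) (fun l => (Real.sqrt 2)⁻¹ * Bq q m l k)]
      refine Finset.sum_congr rfl fun l _ => ?_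
      simp only [Smat, Matrix.of_apply]
      rcases eq_or_ne ((l : ℕ)) ((i : ℕ)) with h | h
      · rw [if_pos h, if_pos h]
      · rw [if_neg h, if_neg h, zero_mul]
    rw [hR, Bq_val]
    rw [Fintype.sum_sum_type, Fintype.sum_sum_type]
    simp only [adjm, Matrix.of_apply, bugG_ll, bugG_lc, bugG_lr, Smat, if_false,
      ite_mul, one_mul, zero_mul, Finset.sum_const_zero, add_zero, ite_ite']
    rw [sum_const_ite m ((i : ℕ) + 1 = q ∧ (k : ℕ) = q) ((Real.sqrt m)⁻¹)]
    by_cases hkq : (k : ℕ) = q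
    · rw [sum_ite_zero' q (fun x => ((i : ℕ) + 1 = x ∨ x + 1 = (i : ℕ)) ∧ (k : ℕ) = x) _
        (by omega)]
      rw [if_neg (by omega : ¬ (i : ℕ) = (k : ℕ))]
      by_cases hi1 : (i : ℕ) + 1 = q
      · rw [if_pos (by omega : (i : ℕ) + 1 = q ∧ (k : ℕ) = q),
          if_pos (by omega : (i : ℕ) + 1 = (k : ℕ) ∨ (k : ℕ) + 1 = (i : ℕ)),
          if_pos (by omega : (i : ℕ) = q ∨ (k : ℕ) = q), zero_add]
        exact key_m_rm hm
      · rw [if_neg (by omega : ¬ ((i : ℕ) + 1 = q ∧ (k : ℕ) = q)),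
          if_neg (by omega : ¬ ((i : ℕ) + 1 = (k : ℕ) ∨ (k : ℕ) + 1 = (i : ℕ)))]
        ring
    · have hkq' : (k : ℕ) < q := by omega
      rw [if_neg (by omega : ¬ ((i : ℕ) + 1 = q ∧ (k : ℕ) = q))]
      by_cases hadj : (i : ℕ) + 1 = (k : ℕ) ∨ (k : ℕ) + 1 = (i : ℕ)
      · rw [sum_ite_cond q (fun x => ((i : ℕ) + 1 = x ∨ x + 1 = (i : ℕ)) ∧ (k : ℕ) = x)
          (k : ℕ) _ (by omega)]
        rw [if_pos hkq', if_neg (by omega : ¬ (i : ℕ) = (k : ℕ)), if_pos hadj,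
          if_neg (by omega : ¬ ((i : ℕ) = q ∨ (k : ℕ) = q))]
        ring
      · rw [sum_ite_zero' q (fun x => ((i : ℕ) + 1 = x ∨ x + 1 = (i : ℕ)) ∧ (k : ℕ) = x) _
          (by omega)]
        rcases eq_or_ne ((i : ℕ)) ((k : ℕ)) with he | he
        · rw [if_pos he, if_neg (by omega : ¬ (i : ℕ) = q)]
          ring
        · rw [if_neg he, if_neg hadj]
          ring
  · -- clique vertex
    have hR : (∑ l : Fin (q + 1), Smat q m (Sum.inr (Sum.inl a)) l * Bq q m l k)
        = (Real.sqrt m)⁻¹ * Bq q m ⟨q, by omega⟩ k := by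
      rw [← sum_pin q q (by omega) (fun l => (Real.sqrt m)⁻¹ * Bq q m l k)]
      refine Finset.sum_congr rfl fun l _ => ?_
      simp only [Smat, Matrix.of_apply]
      rcases eq_or_ne ((l : ℕ)) q with h | h
      · rw [if_pos h, if_pos h]
      · rw [if_neg h, if_neg h, zero_mul]
    rw [hR, Bq_val]
    rw [Fintype.sum_sum_type, Fintype.sum_sum_type]
    simp only [adjm, Matrix.of_apply, bugG_cl, bugG_cc, bugG_cr, Smat,
      ite_mul, one_mul, zero_mul, ite_ite']
    rw [sum_ne_and_ite m a ((k : ℕ) = q) ((Real.sqrt m)⁻¹)]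
    by_cases hk : (k : ℕ) = q - 1
    · rw [sum_ite_cond q (fun x => x + 1 = q ∧ (k : ℕ) = x) (q - 1) _ (by omega),
        sum_ite_cond q (fun x => x = 0 ∧ (k : ℕ) = q - 1 - x) 0 _ (by omega),
        if_pos (by omega : q - 1 < q), if_pos (by omega : 0 < q),
        if_neg (by omega : ¬ (k : ℕ) = q),
        if_neg (by omega : ¬ q = (k : ℕ)),
        if_pos (by omega : q + 1 = (k : ℕ) ∨ (k : ℕ) + 1 = q)]
      simp only [eq_self_iff_true, true_or, if_true]
      linarith [key_2_r2 hm]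
    · by_cases hkq : (k : ℕ) = q
      · rw [sum_ite_zero' q (fun x => x + 1 = q ∧ (k : ℕ) = x) _ (by omega),
          sum_ite_zero' q (fun x => x = 0 ∧ (k : ℕ) = q - 1 - x) _ (by omega),
          if_pos hkq, if_pos (by omega : q = (k : ℕ))]
        simp only [eq_self_iff_true, if_true]
        ring
      · rw [sum_ite_zero' q (fun x => x + 1 = q ∧ (k : ℕ) = x) _ (by omega),
          sum_ite_zero' q (fun x => x = 0 ∧ (k : ℕ) = q - 1 - x) _ (by omega),
          if_neg (by omega : ¬ (k : ℕ) = q),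
          if_neg (by omega : ¬ q = (k : ℕ)),
          if_neg (by omega : ¬ (q + 1 = (k : ℕ) ∨ (k : ℕ) + 1 = q))]
        ring
  · -- right path vertex
    have hjq : (j : ℕ) < q := j.isLt
    have hR : (∑ l : Fin (q + 1), Smat q m (Sum.inr (Sum.inr j)) l * Bq q m l k)
        = (Real.sqrt 2)⁻¹ * Bq q m ⟨q - 1 - (j : ℕ), by omega⟩ k := by
      rw [← sum_pin q (q - 1 - (j : ℕ)) (by omega) (fun l => (Real.sqrt 2)⁻¹ * Bq q m l k)]
      refine Finset.sum_congr rfl fun l _ => ?_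
      simp only [Smat, Matrix.of_apply]
      rcases eq_or_ne ((l : ℕ)) (q - 1 - (j : ℕ)) with h | h
      · rw [if_pos h, if_pos h]
      · rw [if_neg h, if_neg h, zero_mul]
    rw [hR, Bq_val]
    rw [Fintype.sum_sum_type, Fintype.sum_sum_type]
    simp only [adjm, Matrix.of_apply, bugG_rl, bugG_rc, bugG_rr, Smat, if_false,
      ite_mul, one_mul, zero_mul, Finset.sum_const_zero, zero_add, ite_ite']
    rw [sum_const_ite m ((j : ℕ) = 0 ∧ (k : ℕ) = q) ((Real.sqrt m)⁻¹)]
    by_cases hkq : (k : ℕ) = q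
    · rw [sum_ite_zero' q
        (fun x => ((j : ℕ) + 1 = x ∨ x + 1 = (j : ℕ)) ∧ (k : ℕ) = q - 1 - x) _ (by omega)]
      rw [if_neg (by omega : ¬ q - 1 - (j : ℕ) = (k : ℕ))]
      by_cases hj0 : (j : ℕ) = 0
      · rw [if_pos (by omega : (j : ℕ) = 0 ∧ (k : ℕ) = q),
          if_pos (by omega : q - 1 - (j : ℕ) + 1 = (k : ℕ) ∨ (k : ℕ) + 1 = q - 1 - (j : ℕ)),
          if_pos (by omega : q - 1 - (j : ℕ) = q ∨ (k : ℕ) = q), add_zero]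
        exact key_m_rm hm
      · rw [if_neg (by omega : ¬ ((j : ℕ) = 0 ∧ (k : ℕ) = q)),
          if_neg (by omega :
            ¬ (q - 1 - (j : ℕ) + 1 = (k : ℕ) ∨ (k : ℕ) + 1 = q - 1 - (j : ℕ)))]
        ring
    · have hkq' : (k : ℕ) < q := by omega
      rw [if_neg (by omega : ¬ ((j : ℕ) = 0 ∧ (k : ℕ) = q))]
      by_cases hadj : (j : ℕ) + 1 = q - 1 - (k : ℕ) ∨ (q - 1 - (k : ℕ)) + 1 = (j : ℕ)
      · rw [sum_ite_cond q
          (fun x => ((j : ℕ) + 1 = x ∨ x + 1 = (j : ℕ)) ∧ (k : ℕ) = q - 1 - x)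
          (q - 1 - (k : ℕ)) _ (by omega)]
        rw [if_pos (by omega : q - 1 - (k : ℕ) < q),
          if_neg (by omega : ¬ q - 1 - (j : ℕ) = (k : ℕ)),
          if_pos (by omega : q - 1 - (j : ℕ) + 1 = (k : ℕ) ∨ (k : ℕ) + 1 = q - 1 - (j : ℕ)),
          if_neg (by omega : ¬ (q - 1 - (j : ℕ) = q ∨ (k : ℕ) = q))]
        ring
      · rw [sum_ite_zero' q
          (fun x => ((j : ℕ) + 1 = x ∨ x + 1 = (j : ℕ)) ∧ (k : ℕ) = q - 1 - x) _ (by omega)]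
        rcases eq_or_ne (q - 1 - (j : ℕ)) ((k : ℕ)) with he | he
        · rw [if_pos he, if_neg (by omega : ¬ q - 1 - (j : ℕ) = q)]
          ring
        · rw [if_neg he, if_neg (by omega :
            ¬ (q - 1 - (j : ℕ) + 1 = (k : ℕ) ∨ (k : ℕ) + 1 = q - 1 - (j : ℕ)))]
          ring

-- ===== assembly lemmas =====

lemma adjm_symm (q m : ℕ) : (adjm q m)ᵀ = adjm q m := by
  classical
  ext v w
  simp only [Matrix.transpose_apply, adjm, Matrix.of_apply]
  by_cases h : (bugG q m).Adj v w
  · rw [if_pos h.symm, if_pos h]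
  · rw [if_neg (fun hh => h hh.symm), if_neg h]

lemma Aalpha_symm (q m : ℕ) (hq : 2 ≤ q) (α : ℝ) :
    (Aalpha (bugG q m) α)ᵀ = Aalpha (bugG q m) α := by
  rw [Aalpha_eq_s12 q m hq α, Matrix.transpose_add, Matrix.transpose_smul, Matrix.transpose_smul,
    Matrix.diagonal_transpose, adjm_symm q m]

lemma Aalpha_nonneg (q m : ℕ) (hq : 2 ≤ q) (α : ℝ) (h0 : 0 ≤ α) (h1 : α ≤ 1) :
    ∀ v w, 0 ≤ Aalpha (bugG q m) α v w := by
  intro v w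
  rw [Aalpha_eq_s12 q m hq α]
  simp only [Matrix.add_apply, Matrix.smul_apply, smul_eq_mul]
  have hd : 0 ≤ Matrix.diagonal (degr q m) v w := by
    rcases eq_or_ne v w with rfl | h
    · rw [Matrix.diagonal_apply_eq]
      rcases v with i | a | j <;> simp only [degr] <;>
        first
        | positivity
        | (split_ifs <;> positivity)
    · rw [Matrix.diagonal_apply_ne _ h]
  have ha : 0 ≤ adjm q m v w := by
    simp only [adjm, Matrix.of_apply]
    split_ifs <;> norm_num
  have h2 := mul_nonneg h0 hd
  have h3 := mul_nonneg (by linarith : (0:ℝ) ≤ 1 - α) ha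
  linarith

lemma Smat_nonneg (q m : ℕ) : ∀ v k, 0 ≤ Smat q m v k := by
  intro v k
  rcases v with i | a | j <;> simp only [Smat, Matrix.of_apply] <;> split_ifs <;> positivity

lemma Smat_cov (q m : ℕ) (hq : 2 ≤ q) (hm : 1 ≤ m) :
    ∀ v, ∃ k, 0 < Smat q m v k := by
  have h2 : (0:ℝ) < (Real.sqrt 2)⁻¹ := by positivity
  have hmp : (0:ℝ) < (m:ℝ) := by exact_mod_cast hm
  have hmr : (0:ℝ) < (Real.sqrt m)⁻¹ := by positivity
  intro v
  rcases v with i | a | j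
  · refine ⟨⟨(i : ℕ), by omega⟩, ?_⟩
    simp only [Smat, Matrix.of_apply]
    simpa using h2
  · refine ⟨⟨q, by omega⟩, ?_⟩
    simp only [Smat, Matrix.of_apply]
    simpa using hmr
  · refine ⟨⟨q - 1 - (j : ℕ), by omega⟩, ?_⟩
    simp only [Smat, Matrix.of_apply]
    simpa using h2

lemma AS_eq (q m : ℕ) (hq : 2 ≤ q) (hm : 1 ≤ m) (α : ℝ) :
    Aalpha (bugG q m) α * Smat q m = Smat q m * Tmat q m α := by
  rw [Aalpha_eq_s12 q m hq α, Tmat_decomp q m hq α, Matrix.add_mul, Matrix.mul_add,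
    Matrix.smul_mul, Matrix.smul_mul, Matrix.mul_smul, Matrix.mul_smul,
    DS_eq q m hq, AdjS_eq q m hq hm]

lemma T12_eq (n d : ℕ) (hdn : d ≤ n) (α : ℝ) : T12 n d α = Tmat (d / 2) (n - d) α := by
  unfold T12 Tmat
  rw [Nat.cast_sub hdn]

/-- For even `d ≥ 4` and `α ∈ [0,1)`, `ρ_α(B_{n-d+2,d/2,d/2})` is the largest eigenvalue
of the symmetric tridiagonal matrix `T12 n d α` of order `d/2 + 1`. -/
theorem stmt12 (n d : ℕ) (hd4 : 4 ≤ d) (hde : Even d) (hn : d + 1 < n)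
    (α : ℝ) (hα : α ∈ Set.Ico (0 : ℝ) 1) :
    (spectralRadius ℝ (Aalpha (bugGraph (n - d + 2) (d / 2) (d / 2)) α)).toReal ∈
        spectrum ℝ (T12 n d α) ∧
    ∀ μ ∈ spectrum ℝ (T12 n d α),
      μ ≤ (spectralRadius ℝ (Aalpha (bugGraph (n - d + 2) (d / 2) (d / 2)) α)).toReal := by
  obtain ⟨hα0, hα1⟩ := hα
  have hq : 2 ≤ d / 2 := by omega
  have hm : 1 ≤ n - d := by omega
  have hdn : d ≤ n := by omega
  haveI : Nonempty (Fin (d / 2) ⊕ Fin (n - d) ⊕ Fin (d / 2)) := ⟨Sum.inl ⟨0, by omega⟩⟩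
  rw [T12_eq n d hdn α]
  have key := abstract_main (Aalpha (bugG (d / 2) (n - d)) α) (Tmat (d / 2) (n - d) α)
    (Smat (d / 2) (n - d))
    (Aalpha_symm _ _ hq α) (Tmat_symm _ _ α)
    (Aalpha_nonneg _ _ hq α hα0 (le_of_lt hα1)) (Smat_nonneg _ _)
    (Smat_cov _ _ hq hm) (StS _ _ hq hm) (AS_eq _ _ hq hm α)
  exact key
end
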